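/- If f₁ and f₂ are exact CN functions on S (with CN forms over auxiliary variable spaces ℝ^{m₁}, ℝ^{m₂}), then for any real scalars α₁, α₂ the function α₁f₁ + α₂f₂ is an exact CN function on the corresponding product domain. -/

import Mathlib

set_option maxHeartbeats 1000000

/-- `f : ℝⁿ → ℝ` is an exact convertible nonconvex (CN) function. -/
def IsExactCN (n : ℕ) (f : (Fin n → ℝ) → ℝ) : Prop :=
  ∃ (m r : ℕ) (g : (Fin n → ℝ) → (Fin m → ℝ) → ℝ)
    (gi : Fin r → (Fin n → ℝ) → (Fin m → ℝ) → ℝ),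
    ConvexOn ℝ Set.univ (fun p : (Fin n → ℝ) × (Fin m → ℝ) => g p.1 p.2) ∧
    (∀ i, ConvexOn ℝ Set.univ (fun p : (Fin n → ℝ) × (Fin m → ℝ) => gi i p.1 p.2)) ∧
    (∀ x, ∃ y, ∀ i, gi i x y = 0) ∧
    (∀ x y, (∀ i, gi i x y = 0) → f x = g x y)

private lemma helper_comp {n m m' : ℕ} (e : Fin m' → Fin m)
    {h : (Fin n → ℝ) → (Fin m' → ℝ) → ℝ}
    (hh : ConvexOn ℝ Set.univ (fun p : (Fin n → ℝ) × (Fin m' → ℝ) => h p.1 p.2)) :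
    ConvexOn ℝ Set.univ (fun p : (Fin n → ℝ) × (Fin m → ℝ) => h p.1 (fun j => p.2 (e j))) := by
  refine ⟨convex_univ, ?_⟩
  intro p _ q _ a b ha hb hab
  have := hh.2 (Set.mem_univ (p.1, fun j => p.2 (e j)))
    (Set.mem_univ (q.1, fun j => q.2 (e j))) ha hb hab
  exact this

private lemma helper_lin {n m : ℕ} (c₁ c₂ : ℝ) (i j : Fin m) :
    ConvexOn ℝ Set.univ
      (fun p : (Fin n → ℝ) × (Fin m → ℝ) => c₁ * p.2 i + c₂ * p.2 j) := by
  refine ⟨convex_univ, ?_⟩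
  intro p _ q _ a b ha hb hab
  apply le_of_eq
  simp [smul_eq_mul]
  ring

private lemma helper_neg {n m : ℕ} (i : Fin m) :
    ConvexOn ℝ Set.univ (fun p : (Fin n → ℝ) × (Fin m → ℝ) => -p.2 i) := by
  have := helper_lin (n := n) (-1 : ℝ) 0 i i
  simpa using this

/-- Any real linear combination of exact CN functions is an exact CN function. -/
theorem linear_combination_exact_CN (n : ℕ) (f₁ f₂ : (Fin n → ℝ) → ℝ)
    (hf₁ : IsExactCN n f₁) (hf₂ : IsExactCN n f₂) (α₁ α₂ : ℝ) :
    IsExactCN n (fun x => α₁ * f₁ x + α₂ * f₂ x) := by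
  obtain ⟨m₁, r₁, g₁, gi₁, hg₁c, hgi₁c, hfeas₁, hrep₁⟩ := hf₁
  obtain ⟨m₂, r₂, g₂, gi₂, hg₂c, hgi₂c, hfeas₂, hrep₂⟩ := hf₂
  set M := m₁ + m₂ + 2 with hM
  set e₁ : Fin m₁ → Fin M := fun j => ⟨j, by omega⟩ with he₁def
  set e₂ : Fin m₂ → Fin M := fun j => ⟨m₁ + j, by omega⟩ with he₂def
  set k₁ : Fin M := ⟨m₁ + m₂, by omega⟩ with hk₁
  set k₂ : Fin M := ⟨m₁ + m₂ + 1, by omega⟩ with hk₂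
  have hk₁v : (k₁ : ℕ) = m₁ + m₂ := rfl
  have hk₂v : (k₂ : ℕ) = m₁ + m₂ + 1 := rfl
  have he₁v : ∀ j : Fin m₁, ((e₁ j : Fin M) : ℕ) = j := fun j => rfl
  have he₂v : ∀ j : Fin m₂, ((e₂ j : Fin M) : ℕ) = m₁ + j := fun j => rfl
  refine ⟨M, r₁ + r₂ + 2,
    (fun x y => α₁ * y k₁ + α₂ * y k₂),
    (fun i x y =>
      if h : (i : ℕ) < r₁ then gi₁ ⟨i, h⟩ x (fun j => y (e₁ j))
      else if h2 : (i : ℕ) < r₁ + r₂ then gi₂ ⟨(i : ℕ) - r₁, by omega⟩ x (fun j => y (e₂ j))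
      else if (i : ℕ) = r₁ + r₂ then g₁ x (fun j => y (e₁ j)) - y k₁
      else g₂ x (fun j => y (e₂ j)) - y k₂),
    ?_, ?_, ?_, ?_⟩
  · exact helper_lin α₁ α₂ k₁ k₂
  · intro i
    dsimp only
    split_ifs with h h2 h3
    · exact helper_comp e₁ (hgi₁c ⟨i, h⟩)
    · exact helper_comp e₂ (hgi₂c ⟨(i : ℕ) - r₁, by omega⟩)
    · have := (helper_comp e₁ hg₁c).add (helper_neg k₁)
      simp only [sub_eq_add_neg]
      exact this
    · have := (helper_comp e₂ hg₂c).add (helper_neg k₂)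
      simp only [sub_eq_add_neg]
      exact this
  · intro x
    obtain ⟨y₁, hy₁⟩ := hfeas₁ x
    obtain ⟨y₂, hy₂⟩ := hfeas₂ x
    set Y : Fin M → ℝ := fun k =>
      if h : (k : ℕ) < m₁ then y₁ ⟨k, h⟩
      else if h2 : (k : ℕ) < m₁ + m₂ then y₂ ⟨(k : ℕ) - m₁, by omega⟩
      else if (k : ℕ) = m₁ + m₂ then g₁ x y₁ else g₂ x y₂ with hYdef
    have hYapp : ∀ k : Fin M, Y k =
        if h : (k : ℕ) < m₁ then y₁ ⟨k, h⟩
        else if h2 : (k : ℕ) < m₁ + m₂ then y₂ ⟨(k : ℕ) - m₁, by omega⟩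
        else if (k : ℕ) = m₁ + m₂ then g₁ x y₁ else g₂ x y₂ := fun k => rfl
    have hY1 : (fun j => Y (e₁ j)) = y₁ := by
      funext j
      have hv := he₁v j
      rw [hYapp, dif_pos (by omega : ((e₁ j : Fin M) : ℕ) < m₁)]
    have hY2 : (fun j => Y (e₂ j)) = y₂ := by
      funext j
      have hv := he₂v j
      have hj := j.isLt
      rw [hYapp, dif_neg (by omega), dif_pos (by omega)]
      exact congrArg y₂ (Fin.ext (by simp only [Fin.val_mk]; omega))
    have hYk₁ : Y k₁ = g₁ x y₁ := by
      rw [hYapp, dif_neg (by omega), dif_neg (by omega), if_pos hk₁v]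
    have hYk₂ : Y k₂ = g₂ x y₂ := by
      rw [hYapp, dif_neg (by omega), dif_neg (by omega), if_neg (by omega)]
    refine ⟨Y, ?_⟩
    intro i
    dsimp only
    split_ifs with h h2 h3
    · rw [hY1]; exact hy₁ _
    · rw [hY2]; exact hy₂ _
    · rw [hY1, hYk₁]; ring
    · rw [hY2, hYk₂]; ring
  · intro x y hy
    have h1 : ∀ i : Fin r₁, gi₁ i x (fun j => y (e₁ j)) = 0 := by
      intro i
      have h := hy ⟨i, by omega⟩
      dsimp only at h
      rw [dif_pos (i.isLt : (i : ℕ) < r₁)] at h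
      simpa using h
    have h2 : ∀ i : Fin r₂, gi₂ i x (fun j => y (e₂ j)) = 0 := by
      intro i
      have h := hy ⟨r₁ + i, by omega⟩
      dsimp only at h
      have hj := i.isLt
      rw [dif_neg (by omega), dif_pos (by omega)] at h
      have hfin : (⟨r₁ + (i : ℕ) - r₁, by omega⟩ : Fin r₂) = i :=
        Fin.ext (by simp only [Fin.val_mk]; omega)
      rwa [hfin] at h
    have hT1 : g₁ x (fun j => y (e₁ j)) - y k₁ = 0 := by
      have h := hy ⟨r₁ + r₂, by omega⟩
      dsimp only at h
      rwa [dif_neg (by omega), dif_neg (by omega), if_pos rfl] at h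
    have hT2 : g₂ x (fun j => y (e₂ j)) - y k₂ = 0 := by
      have h := hy ⟨r₁ + r₂ + 1, by omega⟩
      dsimp only at h
      rwa [dif_neg (by omega), dif_neg (by omega), if_neg (by omega)] at h
    have e1 : f₁ x = g₁ x (fun j => y (e₁ j)) := hrep₁ x _ h1
    have e2 : f₂ x = g₂ x (fun j => y (e₂ j)) := hrep₂ x _ h2
    rw [sub_eq_zero] at hT1 hT2
    dsimp only
    rw [e1, e2, hT1, hT2]
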